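/- Let U be a cosimplicial groupoid with each U^n a contractible groupoid, and let a ∈ Ob(U^0). For each n and each i ∈ [n], let i_* : U^0 → U^n be the functor induced by the ordinal map [0] → [n] picking out i. Then the assignments [n] → U^n sending i ↦ i_*(a) and (i ≤ j) to the unique morphism i_*(a) → j_*(a) define a map of cosimplicial categories Δ → U, and this construction gives a bijection between Ob(U^0) and the set of cosimplicial functors Δ → U. -/
import Mathlib


open CategoryTheory

/-- A groupoid is contractible if it is nonempty and there is exactly one morphism between
any two objects. -/
def IsContractibleGroupoid (C : Type*) [Category C] : Prop :=
  Nonempty C ∧ (∀ x y : C, Nonempty (x ⟶ y)) ∧ ∀ (x y : C) (f g : x ⟶ y), f = g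

/-- A cosimplicial functor `Δ → U`: functors `[n] → U^n` for all `n`, compatible with all
ordinal maps `θ : [m] → [n]`. -/
structure CosFun (U : CategoryTheory.CosimplicialObject Grpd) where
  F : ∀ n : ℕ, Fin (n + 1) ⥤ U.obj (SimplexCategory.mk n)
  compat : ∀ {m n : ℕ} (θ : SimplexCategory.mk m ⟶ SimplexCategory.mk n),
    F m ⋙ U.map θ = θ.toOrderHom.monotone.functor ⋙ F n


section Aux
variable {D : Type*} [Category D] {C : Type*} [Category C]

/-- Any object assignment into a contractible groupoid extends to a functor. -/
noncomputable def contrFunctor (h : IsContractibleGroupoid C) (f : D → C) : D ⥤ C where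
  obj := f
  map _ := (h.2.1 _ _).some
  map_id _ := h.2.2 _ _ _ _
  map_comp _ _ := h.2.2 _ _ _ _

lemma contrFunctor_ext (h : IsContractibleGroupoid C) (F G : D ⥤ C)
    (hobj : ∀ d, F.obj d = G.obj d) : F = G :=
  CategoryTheory.Functor.ext hobj (fun _ _ _ => h.2.2 _ _ _ _)

end Aux

lemma CosFun.ext' {U : CategoryTheory.CosimplicialObject Grpd} {G H : CosFun U}
    (h : G.F = H.F) : G = H := by
  cases G; cases H; cases h; rfl

/-- Let `U` be a cosimplicial groupoid with each `U^n` a contractible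
groupoid.  Sending `a ∈ Ob(U^0)` to the cosimplicial functor `Δ → U` whose component
`[n] → U^n` sends the vertex `i` to `i_*(a)` (where `i_* : U^0 → U^n` is induced by the
ordinal map `[0] → [n]` picking out `i`), and `i ≤ j` to the unique morphism
`i_*(a) → j_*(a)`, gives a bijection between `Ob(U^0)` and the set of cosimplicial
functors `Δ → U`. -/
theorem objects_level_zero_equiv_cosFun
    (U : CategoryTheory.CosimplicialObject Grpd)
    (hU : ∀ x : SimplexCategory, IsContractibleGroupoid (U.obj x)) :
    ∃ Φ : (U.obj (SimplexCategory.mk 0)) ≃ CosFun U,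
      ∀ (a : U.obj (SimplexCategory.mk 0)) (n : ℕ) (i : Fin (n + 1)),
        ((Φ a).F n).obj i =
          (U.map (SimplexCategory.const (SimplexCategory.mk 0) (SimplexCategory.mk n) i)).obj
            a := by
  classical
  set Φobj : (U.obj (SimplexCategory.mk 0)) → CosFun U := fun a =>
    { F := fun n => contrFunctor (hU _)
        (fun i => (U.map (SimplexCategory.const (SimplexCategory.mk 0)
          (SimplexCategory.mk n) i)).obj a)
      compat := by
        intro m n θ
        refine contrFunctor_ext (hU _) _ _ (fun i => ?_)
        have h1 : U.map (SimplexCategory.const (SimplexCategory.mk 0)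
              (SimplexCategory.mk m) i) ≫ U.map θ
            = U.map (SimplexCategory.const (SimplexCategory.mk 0)
              (SimplexCategory.mk n) (θ.toOrderHom i)) := by
          rw [← U.map_comp, SimplexCategory.const_comp]
        exact congrArg (fun (k : U.obj (SimplexCategory.mk 0) ⟶ _) => k.obj a) h1 } with hΦ
  have hobj : ∀ a n i, ((Φobj a).F n).obj i =
      (U.map (SimplexCategory.const (SimplexCategory.mk 0) (SimplexCategory.mk n) i)).obj a := by
    intro a n i; rfl
  refine ⟨{ toFun := Φobj
            invFun := fun G => (G.F 0).obj 0
            left_inv := ?_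
            right_inv := ?_ }, fun a n i => hobj a n i⟩
  · intro a
    show ((Φobj a).F 0).obj 0 = a
    rw [hobj, SimplexCategory.const_eq_id, U.map_id]
    rfl
  · intro G
    have hF : ∀ n, (Φobj ((G.F 0).obj 0)).F n = G.F n := by
      intro n
      refine contrFunctor_ext (hU _) _ _ (fun i => ?_)
      rw [hobj]
      have h2 := G.compat (SimplexCategory.const (SimplexCategory.mk 0)
        (SimplexCategory.mk n) i)
      have h3 := congrArg (fun (k : Fin 1 ⥤ U.obj (SimplexCategory.mk n)) => k.obj 0) h2
      simpa using h3
    exact CosFun.ext' (funext hF)
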